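/- Let A ⊆ I^d be measurable, X_1,…,X_n i.i.d. with distribution ρ, and N = #{i : X_i ∈ A}. Then for any natural number u, E[ 1_{N ≠ 0} / N^u ] ≤ (u+1)! · n! / ((n+u)! · ρ(A)^u). -/

import Mathlib

open MeasureTheory ProbabilityTheory
open scoped Classical

private lemma fact_aux (u k : ℕ) (hk : 1 ≤ k) :
    (k + u).factorial ≤ (u + 1).factorial * (k.factorial * k ^ u) := by
  induction u with
  | zero => simp
  | succ u ih =>
    have h1 : k + u + 1 ≤ (u + 2) * k := by nlinarith
    calc (k + (u+1)).factorial = (k + u + 1) * (k + u).factorial := by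
          rw [show k + (u+1) = (k+u) + 1 by ring, Nat.factorial_succ]
      _ ≤ ((u+2) * k) * ((u + 1).factorial * (k.factorial * k ^ u)) :=
          Nat.mul_le_mul h1 ih
      _ = (u + 2).factorial * (k.factorial * k ^ (u+1)) := by
          rw [show u+2 = (u+1)+1 from rfl, Nat.factorial_succ ((u+1)), Nat.factorial_succ u]; ring

lemma choose_aux (n u k : ℕ) (hk : k ≤ n) :
    n.choose k * k.factorial * (n + u).factorial
      = n.factorial * ((n + u).choose (k + u) * (k + u).factorial) := by
  have h1 := Nat.choose_mul_factorial_mul_factorial hk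
  have h2 := Nat.choose_mul_factorial_mul_factorial (show k + u ≤ n + u by omega)
  rw [show n + u - (k + u) = n - k by omega] at h2
  calc n.choose k * k.factorial * (n + u).factorial
      = n.choose k * k.factorial * ((n+u).choose (k+u) * (k+u).factorial * (n-k).factorial) := by rw [h2]
    _ = (n.choose k * k.factorial * (n-k).factorial) * ((n+u).choose (k+u) * (k+u).factorial) := by ring
    _ = _ := by rw [h1]

/-- The purely algebraic core inequality. -/
lemma sum_aux (n u : ℕ) (p q : ℝ) (hp : 0 ≤ p) (hq : 0 ≤ q) (hpq : p + q = 1)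
    (f : ℕ → ℝ) (hf0 : f 0 = 0) (hfnn : ∀ k, 0 ≤ f k)
    (hf : ∀ k, f k * (k + u).factorial ≤ ((u+1).factorial : ℝ) * k.factorial) :
    ∑ k ∈ Finset.range (n+1), (n.choose k : ℝ) * f k * p ^ k * q ^ (n - k)
      ≤ ((u + 1).factorial * n.factorial : ℝ) / ((n + u).factorial * p ^ u) := by
  rcases eq_or_lt_of_le hp with hp0 | hp0
  · -- p = 0 : every term vanishes
    have : ∀ k ∈ Finset.range (n+1), (n.choose k : ℝ) * f k * p ^ k * q ^ (n - k) = 0 := by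
      intro k hk
      rcases Nat.eq_zero_or_pos k with rfl | hk1
      · simp [hf0]
      · rw [← hp0, zero_pow (by omega)]; ring
    rw [Finset.sum_eq_zero this]
    positivity
  · rw [le_div_iff₀ (by positivity)]
    rw [Finset.sum_mul]
    have key : ∀ k ∈ Finset.range (n+1),
        (n.choose k : ℝ) * f k * p ^ k * q ^ (n - k) * ((n + u).factorial * p ^ u)
        ≤ ((u+1).factorial * n.factorial : ℝ) *
            (p ^ (k+u) * q ^ ((n+u) - (k+u)) * ((n+u).choose (k+u))) := by
      intro k hk
      rw [Finset.mem_range] at hk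
      have hkn : k ≤ n := by omega
      have hc := choose_aux n u k hkn
      have hfk := hf k
      have h1 : (n.choose k : ℝ) * f k * ((n + u).factorial)
          ≤ ((u+1).factorial * n.factorial : ℝ) * ((n+u).choose (k+u)) := by
        have hkufac : (0:ℝ) < (k+u).factorial := by positivity
        rw [← mul_le_mul_iff_of_pos_right hkufac]
        calc (n.choose k : ℝ) * f k * (n + u).factorial * (k+u).factorial
            = (f k * (k+u).factorial) * ((n.choose k : ℝ) * (n + u).factorial) := by ring
          _ ≤ (((u+1).factorial : ℝ) * k.factorial) * ((n.choose k : ℝ) * (n + u).factorial) := by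
              apply mul_le_mul_of_nonneg_right hfk (by positivity)
          _ = ((u+1).factorial : ℝ) * ((n.choose k : ℝ) * k.factorial * (n + u).factorial) := by ring
          _ = _ := by
              rw [show ((n.choose k : ℝ) * k.factorial * (n + u).factorial)
                  = ((n.choose k * k.factorial * (n + u).factorial : ℕ) : ℝ) by push_cast; ring,
                hc]
              push_cast; ring
      have h2 : (0:ℝ) ≤ p ^ k * q ^ (n - k) * p ^ u := by positivity
      calc (n.choose k : ℝ) * f k * p ^ k * q ^ (n - k) * ((n + u).factorial * p ^ u)
          = ((n.choose k : ℝ) * f k * ((n + u).factorial)) * (p ^ k * q ^ (n-k) * p ^ u) := by ring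
        _ ≤ (((u+1).factorial * n.factorial : ℝ) * ((n+u).choose (k+u))) * (p ^ k * q ^ (n-k) * p ^ u) :=
            mul_le_mul_of_nonneg_right h1 h2
        _ = ((u+1).factorial * n.factorial : ℝ) *
            (p ^ (k+u) * q ^ ((n+u) - (k+u)) * ((n+u).choose (k+u))) := by
            rw [show (n+u) - (k+u) = n - k by omega, pow_add]; ring
    calc ∑ k ∈ Finset.range (n+1),
          (n.choose k : ℝ) * f k * p ^ k * q ^ (n - k) * ((n + u).factorial * p ^ u)
        ≤ ∑ k ∈ Finset.range (n+1), ((u+1).factorial * n.factorial : ℝ) *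
            (p ^ (k+u) * q ^ ((n+u) - (k+u)) * ((n+u).choose (k+u))) :=
          Finset.sum_le_sum key
      _ = ((u+1).factorial * n.factorial : ℝ) *
            ∑ k ∈ Finset.range (n+1), (p ^ (k+u) * q ^ ((n+u) - (k+u)) * ((n+u).choose (k+u))) := by
          rw [Finset.mul_sum]
      _ ≤ ((u+1).factorial * n.factorial : ℝ) * 1 := by
          apply mul_le_mul_of_nonneg_left _ (by positivity)
          have hre : ∑ k ∈ Finset.range (n+1), (p ^ (k+u) * q ^ ((n+u) - (k+u)) * ((n+u).choose (k+u)) : ℝ)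
              = ∑ j ∈ Finset.Ico u (n+u+1), (p ^ j * q ^ ((n+u) - j) * ((n+u).choose j) : ℝ) := by
            rw [Finset.sum_Ico_eq_sum_range]
            simp only [show n+u+1-u = n+1 by omega]
            apply Finset.sum_congr rfl
            intro k hk
            rw [add_comm u k]
          rw [hre]
          calc ∑ j ∈ Finset.Ico u (n+u+1), (p ^ j * q ^ ((n+u) - j) * ((n+u).choose j) : ℝ)
              ≤ ∑ j ∈ Finset.range (n+u+1), (p ^ j * q ^ ((n+u) - j) * ((n+u).choose j) : ℝ) := by
                apply Finset.sum_le_sum_of_subset_of_nonneg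
                · intro j hj; rw [Finset.mem_Ico] at hj; rw [Finset.mem_range]; omega
                · intro j _ _; positivity
            _ = (p + q) ^ (n + u) := (add_pow p q (n+u)).symm
            _ = 1 := by rw [hpq, one_pow]
      _ = _ := by ring

theorem inverse_moment_count_bound {Ω : Type*} [MeasurableSpace Ω] (P : Measure Ω)
    [IsProbabilityMeasure P] (d n : ℕ) (ρ : Measure (Fin d → ℝ)) [IsProbabilityMeasure ρ]
    (a b : ℝ) (hab : a < b) (hsupp : ρ (Set.Icc (fun _ => a) (fun _ => b)) = 1)
    (A : Set (Fin d → ℝ)) (hA : MeasurableSet A)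
    (X : Fin n → Ω → (Fin d → ℝ)) (hXmeas : ∀ i, Measurable (X i))
    (hXiid : iIndepFun X P)
    (hXlaw : ∀ i, Measure.map (X i) P = ρ) (u : ℕ) :
    ∫ ω, (if (Finset.univ.filter (fun i => X i ω ∈ A)).card ≠ 0 then
        (1 : ℝ) / ((Finset.univ.filter (fun i => X i ω ∈ A)).card : ℝ) ^ u else 0) ∂P
      ≤ ((u + 1).factorial * n.factorial : ℝ) /
        ((n + u).factorial * (ρ A).toReal ^ u) := by
  classical
  set f : ℕ → ℝ := fun k => if k ≠ 0 then (1 : ℝ) / (k : ℝ) ^ u else 0 with hfdef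
  set N : Ω → ℕ := fun ω => (Finset.univ.filter (fun i => X i ω ∈ A)).card with hNdef
  -- properties of f
  have hf0 : f 0 = 0 := by simp [hfdef]
  have hfnn : ∀ k, 0 ≤ f k := by intro k; simp only [hfdef]; split <;> positivity
  have hfle1 : ∀ k, f k ≤ 1 := by
    intro k
    simp only [hfdef]
    split
    · rename_i hk
      have h1 : (1:ℝ) ≤ (k:ℝ) := by exact_mod_cast Nat.one_le_iff_ne_zero.2 hk
      have h2 : (1:ℝ) ≤ (k:ℝ) ^ u := one_le_pow₀ h1
      rw [div_le_one (by positivity)]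
      exact h2
    · norm_num
  have hffac : ∀ k, f k * (k + u).factorial ≤ ((u+1).factorial : ℝ) * k.factorial := by
    intro k
    simp only [hfdef]
    split
    · rename_i hk
      have hk1 : 1 ≤ k := Nat.one_le_iff_ne_zero.2 hk
      have hku : (0:ℝ) < (k:ℝ) ^ u := by positivity
      rw [div_mul_eq_mul_div, one_mul, div_le_iff₀ hku]
      have := fact_aux u k hk1
      calc ((k+u).factorial : ℝ) ≤ ((u+1).factorial * (k.factorial * k ^ u) : ℕ) := by exact_mod_cast this
        _ = ((u+1).factorial : ℝ) * k.factorial * (k:ℝ) ^ u := by push_cast; ring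
    · rw [zero_mul]; positivity
  -- events
  set E : Finset (Fin n) → Set Ω := fun S => ⋂ i, X i ⁻¹' (if i ∈ S then A else Aᶜ) with hEdef
  have hAS : ∀ (S : Finset (Fin n)) i, MeasurableSet (if i ∈ S then A else Aᶜ) := by
    intro S i; split; exacts [hA, hA.compl]
  have hEmeas : ∀ S, MeasurableSet (E S) :=
    fun S => MeasurableSet.iInter fun i => (hXmeas i) (hAS S i)
  have hEmem : ∀ (S : Finset (Fin n)) ω, ω ∈ E S ↔ ∀ i, (X i ω ∈ A ↔ i ∈ S) := by
    intro S ω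
    simp only [hEdef, Set.mem_iInter, Set.mem_preimage]
    constructor
    · intro h i
      have := h i
      by_cases hi : i ∈ S <;> simp [hi] at this ⊢ <;> tauto
    · intro h i
      by_cases hi : i ∈ S <;> simp [hi, h i]
  have hEfilter : ∀ (S : Finset (Fin n)) ω, ω ∈ E S →
      Finset.univ.filter (fun i => X i ω ∈ A) = S := by
    intro S ω h
    ext i
    simp [Finset.mem_filter, (hEmem S ω).1 h i]
  have hcover : (⋃ S ∈ (Finset.univ : Finset (Finset (Fin n))), E S) = Set.univ := by
    ext ω
    simp only [Set.mem_iUnion, Set.mem_univ, iff_true, Finset.mem_univ, Set.iUnion_true]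
    exact ⟨Finset.univ.filter (fun i => X i ω ∈ A),
      (hEmem _ ω).2 fun i => by simp [Finset.mem_filter]⟩
  have hdisj : Set.Pairwise (↑(Finset.univ : Finset (Finset (Fin n)))) (Function.onFun Disjoint E) := by
    intro S _ T _ hST
    rw [Function.onFun, Set.disjoint_left]
    intro ω hS hT
    exact hST ((hEfilter S ω hS).symm.trans (hEfilter T ω hT))
  -- probability of events
  have hpre : ∀ (i : Fin n) (B : Set (Fin d → ℝ)), MeasurableSet B → P (X i ⁻¹' B) = ρ B := by
    intro i B hB
    rw [← hXlaw i, Measure.map_apply (hXmeas i) hB]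
  have hPE : ∀ S : Finset (Fin n), P (E S) = (ρ A) ^ S.card * (ρ Aᶜ) ^ (n - S.card) := by
    intro S
    have h := hXiid.measure_inter_preimage_eq_mul Finset.univ
      (sets := fun i => if i ∈ S then A else Aᶜ) (fun i _ => hAS S i)
    have hE' : E S = ⋂ i ∈ Finset.univ, X i ⁻¹' (if i ∈ S then A else Aᶜ) := by
      simp [hEdef]
    rw [hE', h]
    have : ∀ i : Fin n, P (X i ⁻¹' (if i ∈ S then A else Aᶜ))
        = if i ∈ S then ρ A else ρ Aᶜ := by
      intro i
      by_cases hi : i ∈ S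
      · simp only [hi, if_true]; exact hpre i A hA
      · simp only [hi, if_false]; exact hpre i Aᶜ hA.compl
    rw [Finset.prod_congr rfl (fun i _ => this i), Finset.prod_ite, Finset.prod_const,
      Finset.prod_const]
    have e1 : Finset.univ.filter (fun i => i ∈ S) = S := by ext i; simp
    have e2 : Finset.univ.filter (fun i => ¬ i ∈ S) = Sᶜ := by ext i; simp
    rw [e1, e2, Finset.card_compl, Fintype.card_fin]
  -- measurability of N
  have hNmeas : Measurable N := by
    have hN' : N = fun ω => ∑ i : Fin n, if X i ω ∈ A then 1 else 0 := by
      funext ω; rw [hNdef]; exact Finset.card_filter _ _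
    rw [hN']
    exact Finset.measurable_sum _ (fun i _ =>
      Measurable.ite ((hXmeas i) hA) measurable_const measurable_const)
  have hfN_meas : Measurable (fun ω => f (N ω)) := (measurable_from_top (f := f)).comp hNmeas
  have hint : Integrable (fun ω => f (N ω)) P := by
    apply Integrable.mono' (integrable_const (1:ℝ)) hfN_meas.aestronglyMeasurable
    filter_upwards with ω
    rw [Real.norm_eq_abs, abs_of_nonneg (hfnn _)]
    exact hfle1 _
  -- split the integral over the atoms
  have hsplit : ∫ ω, f (N ω) ∂P = ∑ S : Finset (Fin n), f S.card * (P (E S)).toReal := by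
    have h1 : ∫ ω, f (N ω) ∂P
        = ∫ ω in ⋃ S ∈ (Finset.univ : Finset (Finset (Fin n))), E S, f (N ω) ∂P := by
      rw [hcover, setIntegral_univ]
    rw [h1, integral_biUnion_finset Finset.univ (fun S _ => hEmeas S) hdisj
      (fun S _ => hint.integrableOn)]
    apply Finset.sum_congr rfl
    intro S _
    have hconst : Set.EqOn (fun ω => f (N ω)) (fun _ => f S.card) (E S) := by
      intro ω hω
      simp only [hNdef]
      rw [hEfilter S ω hω]
    rw [setIntegral_congr_fun (hEmeas S) hconst, setIntegral_const, smul_eq_mul, measureReal_def]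
    ring
  set p : ℝ := (ρ A).toReal with hpdef
  set q : ℝ := (ρ Aᶜ).toReal with hqdef
  have hp : 0 ≤ p := ENNReal.toReal_nonneg
  have hq : 0 ≤ q := ENNReal.toReal_nonneg
  have hpq : p + q = 1 := by
    have hAc : ρ Aᶜ = 1 - ρ A := prob_compl_eq_one_sub hA
    have hA1 : ρ A ≤ 1 := prob_le_one
    rw [hqdef, hAc, ENNReal.toReal_sub_of_le hA1 (by simp)]
    simp [hpdef]
  have hgoal : ∫ ω, f (N ω) ∂P
      ≤ ((u + 1).factorial * n.factorial : ℝ) / ((n + u).factorial * p ^ u) := by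
    calc ∫ ω, f (N ω) ∂P = ∑ S : Finset (Fin n), f S.card * (P (E S)).toReal := hsplit
      _ = ∑ S : Finset (Fin n), f S.card * (p ^ S.card * q ^ (n - S.card)) := by
          apply Finset.sum_congr rfl
          intro S _
          rw [hPE S, ENNReal.toReal_mul, ENNReal.toReal_pow, ENNReal.toReal_pow]
      _ = ∑ k ∈ Finset.range (n+1), (n.choose k : ℝ) * f k * p ^ k * q ^ (n - k) := by
          rw [← Finset.powerset_univ, Finset.sum_powerset]
          rw [show (Finset.univ : Finset (Fin n)).card = n by simp]
          apply Finset.sum_congr rfl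
          intro k _
          rw [Finset.sum_powersetCard k Finset.univ (fun m => f m * (p ^ m * q ^ (n - m)))]
          rw [show (Finset.univ : Finset (Fin n)).card = n by simp, nsmul_eq_mul]
          ring
      _ ≤ _ := sum_aux n u p q hp hq hpq f hf0 hfnn hffac
  exact hgoal
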